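/- If B is a complex LLL-reduced basis with parameter δ and α = 1/(δ - 1/2), then ‖b₁‖ ≤ α^{(n-1)/2} λ₁, where λ₁ is the length of a shortest nonzero vector of the lattice generated by B over the Gaussian integers. -/

import Mathlib

/-- The `i`-th column of a complex matrix, as a vector of `ℂⁿ`. -/
noncomputable def col {n : ℕ} (B : Matrix (Fin n) (Fin n) ℂ) (i : Fin n) :
    EuclideanSpace ℂ (Fin n) :=
  (WithLp.equiv 2 (Fin n → ℂ)).symm (fun x => B x i)

/-- Gram-Schmidt orthogonalization of a family of vectors in ℂⁿ. -/
noncomputable def gso {n : ℕ} (b : Fin n → EuclideanSpace ℂ (Fin n)) :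
    Fin n → EuclideanSpace ℂ (Fin n) :=
  @InnerProductSpace.gramSchmidt ℂ _ _ _ _ (Fin n) _ _ (inferInstance : WellFoundedLT (Fin n)) b

/-- Gram-Schmidt coefficient μ_{i,j} = ⟨bᵢ, b̂ⱼ⟩ / ‖b̂ⱼ‖². -/
noncomputable def mu {n : ℕ} (b : Fin n → EuclideanSpace ℂ (Fin n)) (i j : Fin n) : ℂ :=
  (inner ℂ (gso b j) (b i) : ℂ) / ((‖gso b j‖ ^ 2 : ℝ) : ℂ)

/-- B is complex LLL-reduced with parameter δ: size-reduced plus the Lovász condition. -/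
def LLLReduced {n : ℕ} (δ : ℝ) (b : Fin n → EuclideanSpace ℂ (Fin n)) : Prop :=
  (∀ i j : Fin n, j < i → |(mu b i j).re| ≤ 1/2 ∧ |(mu b i j).im| ≤ 1/2) ∧
  (∀ i j : Fin n, j.val + 1 = i.val →
    ‖gso b i‖^2 ≥ (δ - ‖mu b i j‖ ^ 2) * ‖gso b j‖^2)

instance auxWF {n : ℕ} : @WellFoundedLT (Fin n)
    (@Preorder.toLT (Fin n)
      (@PartialOrder.toPreorder (Fin n)
        (@SemilatticeInf.toPartialOrder (Fin n)
          (@Lattice.toSemilatticeInf (Fin n)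
            (@DistribLattice.toLattice (Fin n)
              (@instDistribLatticeOfLinearOrder (Fin n) Fin.instLinearOrder)))))) :=
  ⟨(inferInstance : WellFoundedLT (Fin n)).wf⟩

lemma gso_ne_zero {n : ℕ} {b : Fin n → EuclideanSpace ℂ (Fin n)} (i : Fin n)
    (h : LinearIndependent ℂ b) : gso b i ≠ 0 := by
  unfold gso; exact InnerProductSpace.gramSchmidt_ne_zero i h

lemma inner_gso_lt {n : ℕ} (b : Fin n → EuclideanSpace ℂ (Fin n)) {i j : Fin n} (h : i < j) :
    (inner ℂ (gso b j) (b i) : ℂ) = 0 := by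
  unfold gso; exact InnerProductSpace.gramSchmidt_inv_triangular ℂ b h

lemma inner_gso_self {n : ℕ} (b : Fin n → EuclideanSpace ℂ (Fin n)) (k : Fin n) :
    (inner ℂ (gso b k) (b k) : ℂ) = ((‖gso b k‖ ^ 2 : ℝ) : ℂ) := by
  unfold gso
  conv_lhs => rw [InnerProductSpace.gramSchmidt_def'' ℂ b k]
  rw [inner_add_right, inner_sum]
  rw [Finset.sum_eq_zero, add_zero, @inner_self_eq_norm_sq_to_K ℂ]
  · norm_cast
  · intro i hi
    rw [inner_smul_right, InnerProductSpace.gramSchmidt_orthogonal ℂ b (Finset.mem_Iio.1 hi).ne', mul_zero]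

lemma gso_zero {n : ℕ} (hn : 0 < n) (b : Fin n → EuclideanSpace ℂ (Fin n)) :
    gso b ⟨0, hn⟩ = b ⟨0, hn⟩ := by
  unfold gso
  rw [InnerProductSpace.gramSchmidt_def]
  have h : Finset.Iio (⟨0, hn⟩ : Fin n) = ∅ := by
    ext i; simp [Fin.lt_def]
  rw [h, Finset.sum_empty, sub_zero]

/-- one Lovász step -/
lemma lll_step {n : ℕ} {δ : ℝ} (hδ1 : 1/2 < δ) {b : Fin n → EuclideanSpace ℂ (Fin n)}
    (hLLL : LLLReduced δ b) {i j : Fin n} (hij : j.val + 1 = i.val) :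
    ‖gso b j‖^2 ≤ (1 / (δ - 1/2)) * ‖gso b i‖^2 := by
  obtain ⟨hsize, hlov⟩ := hLLL
  have hji : j < i := by rw [Fin.lt_def]; omega
  obtain ⟨hre, him⟩ := hsize i j hji
  have habs : ‖mu b i j‖ ^ 2 ≤ 1/2 := by
    rw [Complex.sq_norm, Complex.normSq_apply]
    nlinarith [abs_nonneg (mu b i j).re, abs_nonneg (mu b i j).im,
      sq_abs (mu b i j).re, sq_abs (mu b i j).im]
  have h1 := hlov i j hij
  have h2 : (δ - 1/2) * ‖gso b j‖^2 ≤ ‖gso b i‖^2 := by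
    nlinarith [sq_nonneg ‖gso b j‖]
  have hpos : 0 < δ - 1/2 := by linarith
  rw [div_mul_eq_mul_div, le_div_iff₀ hpos, one_mul]
  linarith [h2]

lemma lll_chain {n : ℕ} (hn : 0 < n) {δ : ℝ} (hδ1 : 1/2 < δ)
    {b : Fin n → EuclideanSpace ℂ (Fin n)} (hLLL : LLLReduced δ b) :
    ∀ k : ℕ, ∀ hk : k < n,
      ‖gso b ⟨0, hn⟩‖^2 ≤ (1 / (δ - 1/2))^k * ‖gso b ⟨k, hk⟩‖^2 := by
  have hα : 0 < 1 / (δ - 1/2) := div_pos one_pos (by linarith)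
  intro k
  induction k with
  | zero => intro hk; simp
  | succ k ih =>
    intro hk
    have hk' : k < n := by omega
    have hstep : ‖gso b ⟨k, hk'⟩‖^2 ≤ (1 / (δ - 1/2)) * ‖gso b ⟨k+1, hk⟩‖^2 :=
      lll_step hδ1 hLLL (i := ⟨k+1, hk⟩) (j := ⟨k, hk'⟩) rfl
    calc ‖gso b ⟨0, hn⟩‖^2 ≤ (1 / (δ - 1/2))^k * ‖gso b ⟨k, hk'⟩‖^2 := ih hk'
      _ ≤ (1 / (δ - 1/2))^k * ((1 / (δ - 1/2)) * ‖gso b ⟨k+1, hk⟩‖^2) := by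
          apply mul_le_mul_of_nonneg_left hstep (by positivity)
      _ = (1 / (δ - 1/2))^(k+1) * ‖gso b ⟨k+1, hk⟩‖^2 := by ring

theorem stmt3 (n : ℕ) (hn : 0 < n) (δ : ℝ) (hδ1 : 1/2 < δ) (hδ2 : δ ≤ 1)
    (B : Matrix (Fin n) (Fin n) ℂ) (hdet : B.det ≠ 0)
    (hLLL : LLLReduced δ (col B)) (lam : ℝ)
    (hmem : ∃ x : Fin n → GaussianInt,
      (∑ i, GaussianInt.toComplex (x i) • col B i) ≠ 0 ∧
      ‖∑ i, GaussianInt.toComplex (x i) • col B i‖ = lam)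
    (hmin : ∀ x : Fin n → GaussianInt,
      (∑ i, GaussianInt.toComplex (x i) • col B i) ≠ 0 →
      lam ≤ ‖∑ i, GaussianInt.toComplex (x i) • col B i‖) :
    ‖col B ⟨0, hn⟩‖ ≤ (1 / (δ - 1/2)) ^ (((n : ℝ) - 1) / 2) * lam := by
  obtain ⟨x, hv0, hvl⟩ := hmem
  set b := col B with hb
  set v := ∑ i, GaussianInt.toComplex (x i) • b i with hv
  set α := 1 / (δ - 1/2) with hαdef
  have hαpos : 0 < α := div_pos one_pos (by linarith)
  have hα1 : 1 ≤ α := by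
    rw [hαdef, le_div_iff₀ (by linarith), one_mul]; linarith
  -- linear independence of columns
  have hli : LinearIndependent ℂ b := by
    have h : LinearIndependent ℂ (fun i => B.transpose i) :=
      Matrix.linearIndependent_cols_iff_isUnit.mpr
        ((Matrix.isUnit_iff_isUnit_det B).mpr hdet.isUnit)
    have he : b = ⇑(WithLp.linearEquiv 2 ℂ (Fin n → ℂ)).symm ∘ (fun i => B.transpose i) := rfl
    rw [he]
    exact h.map' _ (LinearEquiv.ker _)
  have hgne : ∀ i, gso b i ≠ 0 := fun i => gso_ne_zero i hli
  -- lam positive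
  have hlampos : 0 < lam := hvl ▸ norm_pos_iff.mpr hv0
  -- x is not identically zero
  have hxne : ∃ i, x i ≠ 0 := by
    by_contra h
    push_neg at h
    apply hv0
    rw [hv]
    apply Finset.sum_eq_zero
    intro i _
    rw [h i, map_zero, zero_smul]
  -- maximal index with nonzero coefficient
  set s := Finset.univ.filter (fun i => x i ≠ 0) with hs
  have hsne : s.Nonempty := by
    obtain ⟨i, hi⟩ := hxne
    exact ⟨i, by simp [hs, hi]⟩
  set k := s.max' hsne with hk
  have hxk : x k ≠ 0 := by
    have := s.max'_mem hsne
    simpa [hs] using this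
  have hgtk : ∀ i : Fin n, k < i → x i = 0 := by
    intro i hi
    by_contra hxi
    exact absurd (s.le_max' i (by simp [hs, hxi])) (not_le.mpr hi)
  -- inner product computation
  have hinner : (inner ℂ (gso b k) v : ℂ)
      = GaussianInt.toComplex (x k) * ((‖gso b k‖ ^ 2 : ℝ) : ℂ) := by
    rw [hv, inner_sum]
    rw [Finset.sum_eq_single k]
    · rw [inner_smul_right, inner_gso_self]
    · intro i _ hik
      rcases hik.lt_or_gt with h | h
      · rw [inner_smul_right, inner_gso_lt b h, mul_zero]
      · rw [hgtk i h, map_zero, zero_smul, inner_zero_right]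
    · intro h; exact absurd (Finset.mem_univ k) h
  -- |x k| >= 1
  have habs1 : 1 ≤ ‖GaussianInt.toComplex (x k)‖ := by
    have h1 : (1:ℤ) ≤ (x k).norm := Int.add_one_le_of_lt (GaussianInt.norm_pos.2 hxk)
    have h2 : (1:ℝ) ≤ Complex.normSq (GaussianInt.toComplex (x k)) := by
      rw [← GaussianInt.intCast_real_norm]; exact_mod_cast h1
    nlinarith [Complex.sq_norm (GaussianInt.toComplex (x k)),
      norm_nonneg (GaussianInt.toComplex (x k))]
  -- Cauchy-Schwarz gives ‖gso b k‖ ≤ lam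
  have hcs := norm_inner_le_norm (𝕜 := ℂ) (gso b k) v
  have hnormin : ‖(inner ℂ (gso b k) v : ℂ)‖
      = ‖GaussianInt.toComplex (x k)‖ * ‖gso b k‖^2 := by
    rw [hinner, norm_mul, Complex.norm_real, Real.norm_eq_abs,
      abs_of_nonneg (by positivity : (0:ℝ) ≤ ‖gso b k‖^2)]
  have hgk0 : 0 < ‖gso b k‖ := norm_pos_iff.mpr (hgne k)
  have hgklam : ‖gso b k‖ ≤ lam := by
    rw [hnormin, hvl] at hcs
    nlinarith
  -- chain inequality
  have hchain := lll_chain hn hδ1 hLLL k.val k.isLt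
  have hk0 : ‖gso b ⟨0, hn⟩‖ = ‖b ⟨0, hn⟩‖ := by rw [gso_zero]
  have hpow : α ^ (k.val) ≤ α ^ (n-1) := pow_le_pow_right₀ hα1 (by omega)
  have hgk2 : ‖gso b ⟨k.val, k.isLt⟩‖^2 ≤ lam^2 := by
    have : (⟨k.val, k.isLt⟩ : Fin n) = k := rfl
    rw [this]
    exact pow_le_pow_left₀ (norm_nonneg _) hgklam 2
  have key : ‖b ⟨0, hn⟩‖^2 ≤ α^(n-1) * lam^2 := by
    rw [← hk0]
    calc ‖gso b ⟨0, hn⟩‖^2 ≤ α ^ (k.val) * ‖gso b ⟨k.val, k.isLt⟩‖^2 := hchain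
      _ ≤ α ^ (n-1) * lam^2 := by
          apply mul_le_mul hpow hgk2 (by positivity) (by positivity)
  -- convert to rpow
  have hrhs : (α ^ (((n:ℝ)-1)/2))^2 = α^(n-1) := by
    rw [sq, ← Real.rpow_add hαpos]
    rw [show ((n:ℝ)-1)/2 + ((n:ℝ)-1)/2 = ((n-1:ℕ):ℝ) by
      rw [Nat.cast_sub hn]; push_cast; ring]
    exact Real.rpow_natCast α (n-1)
  have final2 : ‖b ⟨0, hn⟩‖^2 ≤ (α ^ (((n:ℝ)-1)/2) * lam)^2 := by
    rw [mul_pow, hrhs]; exact key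
  have hrnn : 0 ≤ α ^ (((n:ℝ)-1)/2) * lam :=
    mul_nonneg (Real.rpow_nonneg hαpos.le _) hlampos.le
  calc ‖b ⟨0, hn⟩‖ = Real.sqrt (‖b ⟨0, hn⟩‖^2) := (Real.sqrt_sq (norm_nonneg _)).symm
    _ ≤ Real.sqrt ((α ^ (((n:ℝ)-1)/2) * lam)^2) := Real.sqrt_le_sqrt final2
    _ = α ^ (((n:ℝ)-1)/2) * lam := Real.sqrt_sq hrnn
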